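/- arXiv:2110.00923 — 2 statements merged into one kernel-verified Lean document; each statement's English description precedes it below -/
import Mathlib

section
/- Let λ₁, …, λ_r > 0, and let s₀, …, s_r: [0,∞) → ℝ be functions with s_k(t) = s_{k-1}'(t) + λ_k s_{k-1}(t) for k = 1,…,r (each s_{k-1} differentiable). If s_{r-1}(t) ≥ 0 for all t ≥ 0 and s_k(0) ≥ 0 for all k = 0,…,r−2, then s₀(t) ≥ 0 for all t ≥ 0. -/
lemma aux_gronwall (lam : ℝ) (s : ℝ → ℝ) (hs : Differentiable ℝ s)
    (h : ∀ t ≥ (0:ℝ), deriv s t + lam * s t ≥ 0) (h0 : s 0 ≥ 0) :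
    ∀ t ≥ (0:ℝ), s t ≥ 0 := by
  set g : ℝ → ℝ := fun t => Real.exp (lam * t) * s t with hg
  have hgd : Differentiable ℝ g := by
    exact (Real.differentiable_exp.comp (differentiable_const _ |>.mul differentiable_id)).mul hs
  have hderiv : ∀ t, deriv g t = Real.exp (lam * t) * (deriv s t + lam * s t) := by
    intro t
    have h1 : HasDerivAt (fun t : ℝ => lam * t) lam t := by
      simpa using (hasDerivAt_id t).const_mul lam
    have h2 : HasDerivAt (fun t : ℝ => Real.exp (lam * t)) (Real.exp (lam * t) * lam) t :=
      (Real.hasDerivAt_exp (lam * t)).comp t h1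
    have h3 : HasDerivAt g (Real.exp (lam * t) * lam * s t + Real.exp (lam * t) * deriv s t) t :=
      h2.mul (hs t).hasDerivAt
    rw [h3.deriv]; ring
  have hmono : MonotoneOn g (Set.Ici (0:ℝ)) := by
    apply monotoneOn_of_deriv_nonneg (convex_Ici 0) hgd.continuous.continuousOn
      (hgd.differentiableOn.mono interior_subset)
    intro t ht
    rw [interior_Ici] at ht
    rw [hderiv]
    exact mul_nonneg (Real.exp_pos _).le (h t ht.le)
  intro t ht
  have h1 : g 0 ≤ g t := hmono Set.self_mem_Ici ht ht
  have h2 : g 0 = s 0 := by simp [hg]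
  have h3 : (0:ℝ) ≤ Real.exp (lam * t) * s t := by
    calc (0:ℝ) ≤ g t := le_trans (h2 ▸ h0) h1
      _ = _ := rfl
  exact nonneg_of_mul_nonneg_right h3 (Real.exp_pos _)

theorem stmt_13 (r : ℕ) (hr : 2 ≤ r) (lam : ℕ → ℝ)
    (hlam : ∀ k, 1 ≤ k → k ≤ r → 0 < lam k)
    (s : ℕ → ℝ → ℝ)
    (hdiff : ∀ k, k ≤ r - 1 → Differentiable ℝ (s k))
    (hdef : ∀ k, 1 ≤ k → k ≤ r → ∀ t, s k t = deriv (s (k - 1)) t + lam k * s (k - 1) t)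
    (hsr : ∀ t ≥ (0:ℝ), s (r - 1) t ≥ 0)
    (hinit : ∀ k, k ≤ r - 2 → s k 0 ≥ 0) :
    ∀ t ≥ (0:ℝ), s 0 t ≥ 0 := by
  have claim : ∀ j, j ≤ r - 1 → ∀ t ≥ (0:ℝ), s (r - 1 - j) t ≥ 0 := by
    intro j
    induction j with
    | zero => intro _; simpa using hsr
    | succ j ih =>
      intro hj
      set k := r - 1 - (j + 1) with hk
      have hk1 : k + 1 = r - 1 - j := by omega
      apply aux_gronwall (lam (k + 1)) (s k) (hdiff k (by omega))
      · intro t ht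
        have := hdef (k + 1) (by omega) (by omega) t
        simp only [Nat.add_sub_cancel] at this
        rw [← this]
        rw [hk1]
        exact ih (by omega) t ht
      · exact hinit k (by omega)
  have := claim (r - 1) le_rfl
  simpa [Nat.sub_self] using this
end

section
/- Let h be Lipschitz with constant L, M: [0,∞) → [0,∞), and suppose ε satisfies 0 < ε ≤ h₀(x̂(0),0)/(N + Σᵢ(2‖θ̂ᵢ(0)‖/θ̄ᵢ + ‖θ̂ᵢ(0)‖²/θ̄ᵢ²)) where h₀(x̂,t) = h(x̂) − L M(t) and h₀(x̂(0),0) > 0. Then the composite function h̄(0) = h₀(x̂(0),0) − Σᵢ (ε/θ̄ᵢ²)‖θᵢ − θ̂ᵢ(0)‖² is nonnegative for every choice of θᵢ with ‖θᵢ‖ ≤ θ̄ᵢ, and consequently if h̄'(t) ≥ −μ h̄(t) for all t ≥ 0 then h(x(t)) ≥ 0 for all t ≥ 0 whenever ‖x̂(t) − x(t)‖ ≤ M(t). -/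
theorem stmt_14 {n N : ℕ} (hN : 0 < N)
    (h : EuclideanSpace ℝ (Fin n) → ℝ) (L : ℝ) (hL : 0 < L)
    (hLip : ∀ x y : EuclideanSpace ℝ (Fin n), |h x - h y| ≤ L * ‖x - y‖)
    (M : ℝ → ℝ) (hM : ∀ t ≥ (0:ℝ), 0 ≤ M t)
    (θbar : Fin N → ℝ) (hθbar : ∀ i, 0 < θbar i)
    (θ : Fin N → EuclideanSpace ℝ (Fin n)) (hθ : ∀ i, ‖θ i‖ ≤ θbar i)
    (θhat : Fin N → ℝ → EuclideanSpace ℝ (Fin n))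
    (x xhat : ℝ → EuclideanSpace ℝ (Fin n))
    (μ ε : ℝ) (hμ : 0 < μ)
    (hinit_pos : 0 < h (xhat 0) - L * M 0)
    (hε : 0 < ε ∧ ε ≤ (h (xhat 0) - L * M 0) /
      ((N : ℝ) + ∑ i, (2 * ‖θhat i 0‖ / θbar i + ‖θhat i 0‖ ^ 2 / (θbar i) ^ 2)))
    (hbar : ℝ → ℝ)
    (hbar_def : ∀ t, hbar t =
      h (xhat t) - L * M t - ∑ i, (ε / (θbar i) ^ 2) * ‖θ i - θhat i t‖ ^ 2)
    (hdiff : Differentiable ℝ hbar) :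
    hbar 0 ≥ 0 ∧
      ((∀ t ≥ (0:ℝ), deriv hbar t ≥ -μ * hbar t) →
        (∀ t ≥ (0:ℝ), ‖xhat t - x t‖ ≤ M t) →
        ∀ t ≥ (0:ℝ), h (x t) ≥ 0) := by
  obtain ⟨hε0, hεle⟩ := hε
  -- Part 1
  set S := ∑ i, (2 * ‖θhat i 0‖ / θbar i + ‖θhat i 0‖ ^ 2 / (θbar i) ^ 2) with hS
  have hSnn : 0 ≤ S := by
    apply Finset.sum_nonneg
    intro i _
    have hb := hθbar i
    positivity
  have hNS : (0:ℝ) < (N : ℝ) + S := by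
    have : (1:ℝ) ≤ (N:ℝ) := by exact_mod_cast hN
    linarith
  have key : ε * ((N:ℝ) + S) ≤ h (xhat 0) - L * M 0 :=
    (le_div_iff₀ hNS).mp hεle
  have sum_le : ∑ i, (ε / (θbar i) ^ 2) * ‖θ i - θhat i 0‖ ^ 2 ≤ ε * ((N:ℝ) + S) := by
    have : ∑ i, (ε / (θbar i) ^ 2) * ‖θ i - θhat i 0‖ ^ 2 ≤
        ∑ i, ε * (1 + (2 * ‖θhat i 0‖ / θbar i + ‖θhat i 0‖ ^ 2 / (θbar i) ^ 2)) := by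
      apply Finset.sum_le_sum
      intro i _
      have hb := hθbar i
      have hb' : θbar i ≠ 0 := ne_of_gt hb
      have hd : ‖θ i - θhat i 0‖ ≤ θbar i + ‖θhat i 0‖ := by
        calc ‖θ i - θhat i 0‖ ≤ ‖θ i‖ + ‖θhat i 0‖ := norm_sub_le _ _
          _ ≤ θbar i + ‖θhat i 0‖ := by linarith [hθ i]
      have hd2 : ‖θ i - θhat i 0‖ ^ 2 ≤ (θbar i + ‖θhat i 0‖) ^ 2 := by
        have := norm_nonneg (θ i - θhat i 0)
        nlinarith
      have heq : ε * (1 + (2 * ‖θhat i 0‖ / θbar i + ‖θhat i 0‖ ^ 2 / (θbar i) ^ 2))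
          = (ε / (θbar i) ^ 2) * (θbar i + ‖θhat i 0‖) ^ 2 := by
        field_simp
        ring
      rw [heq]
      apply mul_le_mul_of_nonneg_left hd2
      positivity
    calc _ ≤ _ := this
      _ = ε * ((N:ℝ) + S) := by
        simp only [hS, mul_add, mul_one, Finset.sum_add_distrib, Finset.sum_const,
          Finset.card_univ, Fintype.card_fin, nsmul_eq_mul, Finset.mul_sum]
        ring
  have h0 : hbar 0 ≥ 0 := by
    rw [hbar_def 0]
    linarith
  refine ⟨h0, ?_⟩
  intro hgron hobs t ht
  -- Grönwall: hbar t ≥ 0 for t ≥ 0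
  have hbar_nn : ∀ s ≥ (0:ℝ), 0 ≤ hbar s := by
    intro s hs
    set g : ℝ → ℝ := fun u => hbar u * Real.exp (μ * u) with hg
    have hgdiff : Differentiable ℝ g := by
      exact hdiff.mul ((differentiable_const μ).mul differentiable_id).exp
    have hmono : MonotoneOn g (Set.Ici (0:ℝ)) := by
      apply monotoneOn_of_deriv_nonneg (convex_Ici 0) hgdiff.continuous.continuousOn
        (hgdiff.differentiableOn.mono interior_subset)
      intro u hu
      rw [interior_Ici] at hu
      have hu0 : (0:ℝ) ≤ u := le_of_lt hu
      have hd : deriv g u = deriv hbar u * Real.exp (μ * u)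
          + hbar u * (μ * Real.exp (μ * u)) := by
        have hde : deriv (fun u => Real.exp (μ * u)) u = μ * Real.exp (μ * u) := by
          simpa [mul_comm] using (((hasDerivAt_id u).const_mul μ).exp).deriv
        rw [hg, deriv_fun_mul (hdiff u) (by fun_prop), hde]
      rw [hd]
      have := hgron u hu0
      have hexp := Real.exp_pos (μ * u)
      nlinarith
    have := hmono (Set.self_mem_Ici) hs hs
    have hg0 : g 0 = hbar 0 := by simp [hg]
    have hexp := Real.exp_pos (μ * s)
    rw [hg0] at this
    have hgs : g s = hbar s * Real.exp (μ * s) := rfl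
    rw [hgs] at this
    nlinarith
  have hbs := hbar_nn t ht
  have hsum_nn : 0 ≤ ∑ i, (ε / (θbar i) ^ 2) * ‖θ i - θhat i t‖ ^ 2 := by
    apply Finset.sum_nonneg
    intro i _
    have hb := hθbar i
    positivity
  have h1 : h (xhat t) - L * M t ≥ 0 := by
    have := hbar_def t
    linarith
  have h2 : |h (x t) - h (xhat t)| ≤ L * M t := by
    calc |h (x t) - h (xhat t)| ≤ L * ‖x t - xhat t‖ := hLip _ _
      _ = L * ‖xhat t - x t‖ := by rw [norm_sub_rev]
      _ ≤ L * M t := by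
        apply mul_le_mul_of_nonneg_left (hobs t ht) (le_of_lt hL)
  have := abs_le.mp h2
  linarith [this.1]
end
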